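/- Let c, d be positive integers, I = ℕ^d × [c], I_n = [n]^d × [c], and let (L_n)_{n≥1} be a Sym-invariant chain of lattices with limit L = ∪_{n≥1} L_n. The following are equivalent: (i) the chain Graver-stabilizes, i.e. there exist p ∈ ℕ and a subset B_p ⊆ L_p such that for every n ≥ p, Sym(n)(B_p) equals the Graver basis of L_n; (ii) there exist q, q' ∈ ℕ such that for all n ≥ q: (a) L_n = L ∩ ℤ^(I_n), and (b) every element of the Graver basis of L_n has support size at most q'; (iii) L has a finite equivariant Graver basis, i.e. a finite B ⊆ L such that Sym(B) equals the Graver basis of L. -/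

import Mathlib

open Finsupp

/-- A permutation of `ℕ` that moves only finitely many points:
an element of the infinite symmetric group `Sym`. -/
def IsFinPerm (σ : Equiv.Perm ℕ) : Prop := {i | σ i ≠ i}.Finite

/-- Membership in `Sym(n)`: permutations of `ℕ` fixing every index `≥ n`
(the indices `0, 1, …, n-1` play the role of `[n] = {1, …, n}`). -/
def InSymN (n : ℕ) (σ : Equiv.Perm ℕ) : Prop := ∀ i, n ≤ i → σ i = i

/-- `u ∈ ℤ_{≥0}^{(I)}`. -/
def FsNonneg {I : Type*} (u : I →₀ ℤ) : Prop := ∀ i, 0 ≤ u i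

/-- The partial order `⊑`. -/
def Sqle {I : Type*} (u v : I →₀ ℤ) : Prop := ∀ i, 0 ≤ u i * v i ∧ |u i| ≤ |v i|

/-- The Graver basis of (the underlying set of) a lattice `L`:
the `⊑`-minimal elements of `L \ {0}`. -/
def GraverBasis {I : Type*} (L : Set (I →₀ ℤ)) : Set (I →₀ ℤ) :=
  {u | u ∈ L ∧ u ≠ 0 ∧ ∀ v ∈ L, v ≠ 0 → Sqle v u → v = u}

/-- The `L`-fiber of `u`. -/
def latFiber {I : Type*} (L : Set (I →₀ ℤ)) (u : I →₀ ℤ) : Set (I →₀ ℤ) :=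
  {v | FsNonneg v ∧ u - v ∈ L}

/-- `B` is a Markov basis of `L`: for each nonnegative `u` the graph on the fiber
`F_L(u)` with edges `v ~ w` whenever `v - w ∈ B ∪ (-B)` is connected. -/
def IsMarkovBasis {I : Type*} (L B : Set (I →₀ ℤ)) : Prop :=
  ∀ u, FsNonneg u → ∀ v ∈ latFiber L u, ∀ w ∈ latFiber L u,
    Relation.ReflTransGen
      (fun x y => x ∈ latFiber L u ∧ y ∈ latFiber L u ∧ (x - y ∈ B ∨ y - x ∈ B)) v w

/-- A term order on `ℤ_{≥0}^{(I)}`: an additive well-order on the nonnegative elements. -/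
structure TermOrderZ (I : Type*) where
  lt : (I →₀ ℤ) → (I →₀ ℤ) → Prop
  irrefl : ∀ u, FsNonneg u → ¬ lt u u
  trans : ∀ u v w, FsNonneg u → FsNonneg v → FsNonneg w → lt u v → lt v w → lt u w
  total : ∀ u v, FsNonneg u → FsNonneg v → u ≠ v → lt u v ∨ lt v u
  min_exists : ∀ S : Set (I →₀ ℤ), (∀ u ∈ S, FsNonneg u) → S.Nonempty →
    ∃ m ∈ S, ∀ u ∈ S, u ≠ m → ¬ lt u m
  add_right : ∀ u v w, FsNonneg u → FsNonneg v → FsNonneg w → lt u v → lt (u + w) (v + w)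

/-- There is a directed path (w.r.t. `lt`, with moves from `B ∪ (-B)`) inside the fiber
of `u` from `u` to the `lt`-minimal element of the fiber. -/
def GroebnerPath {I : Type*} (L : Set (I →₀ ℤ)) (lt : (I →₀ ℤ) → (I →₀ ℤ) → Prop)
    (B : Set (I →₀ ℤ)) (u : I →₀ ℤ) : Prop :=
  ∃ (s : ℕ) (v : ℕ → (I →₀ ℤ)), v 0 = u ∧ (∀ t ≤ s, v t ∈ latFiber L u) ∧
    (∀ t < s, lt (v (t + 1)) (v t) ∧ (v t - v (t + 1) ∈ B ∨ v (t + 1) - v t ∈ B)) ∧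
    (∀ w ∈ latFiber L u, w ≠ v s → lt (v s) w)

/-- `B` is a Gröbner basis of `L` with respect to the term order `lt`. -/
def IsGroebnerBasis {I : Type*} (L : Set (I →₀ ℤ))
    (lt : (I →₀ ℤ) → (I →₀ ℤ) → Prop) (B : Set (I →₀ ℤ)) : Prop :=
  ∀ u, FsNonneg u → GroebnerPath L lt B u

/-- `H` is a Hilbert basis of the (set underlying a) monoid `M`:
a generating set of `M` contained in every generating set of `M`. -/
def IsHilbertBasis {N : Type*} [AddCommMonoid N] (M H : Set N) : Prop :=
  H ⊆ M ∧ (AddSubmonoid.closure H : Set N) = M ∧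
    ∀ A ⊆ M, (AddSubmonoid.closure A : Set N) = M → H ⊆ A

/-- `u` is an irreducible element of `M`. -/
def IsIrredElem {N : Type*} [AddCommMonoid N] (M : Set N) (u : N) : Prop :=
  u ∈ M ∧ u ≠ 0 ∧ ∀ v ∈ M, ∀ w ∈ M, u = v + w → v = 0 ∨ w = 0

/-- The action of a permutation of `ℕ` on `ℤ^{(ℕ^d × [c])}`:
`(σ·u)((σ i₁, …, σ i_d), j) = u((i₁, …, i_d), j)`. -/
noncomputable def permActd (d c : ℕ) (σ : Equiv.Perm ℕ) (u : (Fin d → ℕ) × Fin c →₀ ℤ) :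
    (Fin d → ℕ) × Fin c →₀ ℤ :=
  Finsupp.equivMapDomain
    (Equiv.prodCongr ((Equiv.refl (Fin d)).arrowCongr σ) (Equiv.refl (Fin c))) u

/-- The action of a permutation of `ℕ` on `ℤ^{(ℕ × [c])}`: `(σ·u)(σ i, j) = u(i, j)`. -/
noncomputable def permAct1 (c : ℕ) (σ : Equiv.Perm ℕ) (u : ℕ × Fin c →₀ ℤ) :
    ℕ × Fin c →₀ ℤ :=
  Finsupp.equivMapDomain (Equiv.prodCongr σ (Equiv.refl (Fin c))) u

/-- The action of a permutation of `ℕ` on `ℤ^{(ℕ)}`: `(σ·u)(σ i) = u i`. -/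
noncomputable def permAct0 (σ : Equiv.Perm ℕ) (u : ℕ →₀ ℤ) : ℕ →₀ ℤ :=
  Finsupp.equivMapDomain σ u

/-- `Sym(B)` for `B ⊆ ℤ^{(ℕ^d × [c])}`. -/
def symOrbitd (d c : ℕ) (B : Set ((Fin d → ℕ) × Fin c →₀ ℤ)) :
    Set ((Fin d → ℕ) × Fin c →₀ ℤ) :=
  {w | ∃ σ, IsFinPerm σ ∧ ∃ b ∈ B, w = permActd d c σ b}

/-- `Sym(n)(B)` for `B ⊆ ℤ^{(ℕ^d × [c])}`. -/
def symOrbitNd (d c n : ℕ) (B : Set ((Fin d → ℕ) × Fin c →₀ ℤ)) :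
    Set ((Fin d → ℕ) × Fin c →₀ ℤ) :=
  {w | ∃ σ, InSymN n σ ∧ ∃ b ∈ B, w = permActd d c σ b}

/-- `Sym(B)` for `B ⊆ ℤ^{(ℕ × [c])}`. -/
def symOrbit1 (c : ℕ) (B : Set (ℕ × Fin c →₀ ℤ)) : Set (ℕ × Fin c →₀ ℤ) :=
  {w | ∃ σ, IsFinPerm σ ∧ ∃ b ∈ B, w = permAct1 c σ b}

/-- `Sym(B)` for `B ⊆ ℤ^{(ℕ)}`. -/
def symOrbit0 (B : Set (ℕ →₀ ℤ)) : Set (ℕ →₀ ℤ) :=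
  {w | ∃ σ, IsFinPerm σ ∧ ∃ b ∈ B, w = permAct0 σ b}

/-- `supp(u) ⊆ I_n = [n]^d × [c]`. -/
def SuppIn (d c n : ℕ) (u : (Fin d → ℕ) × Fin c →₀ ℤ) : Prop :=
  ∀ p : (Fin d → ℕ) × Fin c, u p ≠ 0 → ∀ k, p.1 k < n

/-- `ℤ^{(I_n)}`, for `I_n = [n]^d × [c]`, as a subgroup of `ℤ^{(ℕ^d × [c])}`. -/
noncomputable def suppSubgroup (d c n : ℕ) : AddSubgroup ((Fin d → ℕ) × Fin c →₀ ℤ) where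
  carrier := {u | SuppIn d c n u}
  zero_mem' := by intro p hp; simp at hp
  add_mem' := by
    intro a b ha hb p hp k
    by_cases h : a p = 0
    · refine hb p ?_ k
      intro hbp
      exact hp (by simp [h, hbp])
    · exact ha p h k
  neg_mem' := by
    intro a ha p hp k
    refine ha p ?_ k
    intro hap
    exact hp (by simp [hap])

/-- The positive part `u⁺`. -/
noncomputable def fsPos {I : Type*} (u : I →₀ ℤ) : I →₀ ℤ :=
  u.mapRange (fun z => max z 0) (by simp)

/-- The negative part `u⁻`. -/
noncomputable def fsNeg {I : Type*} (u : I →₀ ℤ) : I →₀ ℤ :=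
  u.mapRange (fun z => max (-z) 0) (by simp)

section SqleLemmas

variable {I : Type*}

lemma int_sub_natAbs {a b : ℤ} (h1 : 0 ≤ a * b) (h2 : |a| ≤ |b|) :
    (b - a).natAbs + a.natAbs = b.natAbs := by
  rw [Int.abs_eq_natAbs, Int.abs_eq_natAbs] at h2
  rcases mul_nonneg_iff.mp h1 with ⟨ha, hb⟩ | ⟨ha, hb⟩ <;> omega

lemma sqle_refl (u : I →₀ ℤ) : Sqle u u := fun i => ⟨mul_self_nonneg _, le_rfl⟩

lemma sqle_trans {u v w : I →₀ ℤ} (h1 : Sqle u v) (h2 : Sqle v w) : Sqle u w := by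
  intro i
  obtain ⟨ha, hb⟩ := h1 i
  obtain ⟨hc, hd⟩ := h2 i
  refine ⟨?_, le_trans hb hd⟩
  rcases eq_or_ne (v i) 0 with hv | hv
  · have : |u i| ≤ 0 := by simpa [hv] using hb
    have : u i = 0 := by rwa [abs_nonpos_iff] at this
    simp [this]
  · rcases mul_nonneg_iff.mp ha with ⟨h3, h4⟩ | ⟨h3, h4⟩ <;>
      rcases mul_nonneg_iff.mp hc with ⟨h5, h6⟩ | ⟨h5, h6⟩
    · exact mul_nonneg h3 h6
    · exact absurd (le_antisymm h5 h4) hv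
    · exact absurd (le_antisymm h4 h5) hv
    · exact mul_nonneg_iff.mpr (Or.inr ⟨h3, h6⟩)

lemma sqle_supp_subset {u v : I →₀ ℤ} (h : Sqle u v) : u.support ⊆ v.support := by
  intro i hi
  rw [Finsupp.mem_support_iff] at hi ⊢
  intro hv
  have hb := (h i).2
  rw [hv] at hb
  simp only [abs_zero] at hb
  exact hi (abs_nonpos_iff.mp hb)

/-- the 1-norm -/
def normOne {I : Type*} (u : I →₀ ℤ) : ℕ := u.sum fun _ z => z.natAbs

lemma normOne_eq_sum {u : I →₀ ℤ} {s : Finset I} (h : u.support ⊆ s) :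
    normOne u = ∑ i ∈ s, (u i).natAbs :=
  Finsupp.sum_of_support_subset u h _ (by simp)

lemma normOne_eq_zero {u : I →₀ ℤ} : normOne u = 0 ↔ u = 0 := by
  rw [normOne_eq_sum (le_refl u.support), Finset.sum_eq_zero_iff]
  constructor
  · intro h
    ext i
    by_cases hi : i ∈ u.support
    · have := h i hi
      simp only [Finsupp.coe_zero, Pi.zero_apply]
      omega
    · simpa using Finsupp.notMem_support_iff.mp hi
  · intro h; subst h; simp

lemma sqle_normOne_add {u v : I →₀ ℤ} (h : Sqle v u) :
    normOne (u - v) + normOne v = normOne u := by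
  have hsv : v.support ⊆ u.support := sqle_supp_subset h
  have hsd : (u - v).support ⊆ u.support := by
    intro i hi
    rw [Finsupp.mem_support_iff] at hi ⊢
    intro hu
    apply hi
    have : v i = 0 := by
      have := (h i).2
      rw [hu] at this
      simpa [abs_nonpos_iff] using this
    simp [Finsupp.sub_apply, hu, this]
  rw [normOne_eq_sum hsd, normOne_eq_sum hsv, normOne_eq_sum (le_refl u.support),
    ← Finset.sum_add_distrib]
  refine Finset.sum_congr rfl fun i _ => ?_
  exact int_sub_natAbs (h i).1 (h i).2

lemma sqle_normOne_mono {u v : I →₀ ℤ} (h : Sqle v u) : normOne v ≤ normOne u := by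
  have := sqle_normOne_add h; omega

lemma sqle_eq_of_normOne {u v : I →₀ ℤ} (h : Sqle v u) (he : normOne v = normOne u) :
    v = u := by
  have := sqle_normOne_add h
  have : normOne (u - v) = 0 := by omega
  have := normOne_eq_zero.mp this
  have : u = v := by rwa [sub_eq_zero] at this
  exact this.symm

lemma finite_sqle (u : I →₀ ℤ) : {w : I →₀ ℤ | Sqle w u}.Finite := by
  classical
  have hfin : (Set.univ.pi fun i : u.support => Set.Icc (-(|u (i : I)|)) (|u (i : I)|)).Finite :=
    Set.Finite.pi fun i => Set.finite_Icc _ _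
  apply Set.Finite.of_finite_image (f := fun w => fun i : u.support => w (i : I))
  · apply hfin.subset
    rintro g ⟨w, hw, rfl⟩ i _
    exact abs_le.mp ((hw (i : I)).2)
  · intro w hw w' hw' he
    ext i
    by_cases hi : i ∈ u.support
    · exact congrFun he ⟨i, hi⟩
    · have hu : u i = 0 := Finsupp.notMem_support_iff.mp hi
      have h1 : w i = 0 := by
        have := (hw i).2; rw [hu] at this; simpa using abs_nonpos_iff.mp (by simpa using this)
      have h2 : w' i = 0 := by
        have := (hw' i).2; rw [hu] at this; simpa using abs_nonpos_iff.mp (by simpa using this)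
      rw [h1, h2]

lemma graver_exists (T : Set (I →₀ ℤ)) {u : I →₀ ℤ} (hu : u ∈ T) (h0 : u ≠ 0) :
    ∃ v ∈ GraverBasis T, Sqle v u := by
  classical
  have hCfin : {w : I →₀ ℤ | w ∈ T ∧ w ≠ 0 ∧ Sqle w u}.Finite :=
    (finite_sqle u).subset fun w hw => hw.2.2
  have hne : hCfin.toFinset.Nonempty := ⟨u, by simp [hu, h0, sqle_refl]⟩
  obtain ⟨v, hv, hmin⟩ := hCfin.toFinset.exists_min_image normOne hne
  rw [Set.Finite.mem_toFinset] at hv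
  refine ⟨v, ⟨hv.1, hv.2.1, ?_⟩, hv.2.2⟩
  intro w hwT hw0 hwv
  have hwC : w ∈ hCfin.toFinset := by
    rw [Set.Finite.mem_toFinset]
    exact ⟨hwT, hw0, sqle_trans hwv hv.2.2⟩
  exact sqle_eq_of_normOne hwv (le_antisymm (sqle_normOne_mono hwv) (hmin w hwC))

end SqleLemmas

section Perm

variable {d c : ℕ}

/-- The domain equivalence used by `permActd`. -/
def peD (d c : ℕ) (σ : Equiv.Perm ℕ) : ((Fin d → ℕ) × Fin c) ≃ ((Fin d → ℕ) × Fin c) :=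
  Equiv.prodCongr ((Equiv.refl (Fin d)).arrowCongr σ) (Equiv.refl (Fin c))

lemma peD_apply (σ : Equiv.Perm ℕ) (x : (Fin d → ℕ) × Fin c) :
    peD d c σ x = (fun k => σ (x.1 k), x.2) := by
  simp [peD, Equiv.prodCongr, Equiv.arrowCongr]
  rfl

lemma peD_symm_apply (σ : Equiv.Perm ℕ) (x : (Fin d → ℕ) × Fin c) :
    (peD d c σ).symm x = (fun k => σ.symm (x.1 k), x.2) := by
  simp [peD, Equiv.prodCongr, Equiv.arrowCongr]
  rfl

lemma permActd_eq (σ : Equiv.Perm ℕ) (u : (Fin d → ℕ) × Fin c →₀ ℤ) :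
    permActd d c σ u = Finsupp.equivMapDomain (peD d c σ) u := rfl

lemma permActd_apply (σ : Equiv.Perm ℕ) (u : (Fin d → ℕ) × Fin c →₀ ℤ)
    (x : (Fin d → ℕ) × Fin c) :
    permActd d c σ u x = u (fun k => σ.symm (x.1 k), x.2) := by
  rw [permActd_eq, Finsupp.equivMapDomain_apply, peD_symm_apply]

lemma permActd_apply' (σ : Equiv.Perm ℕ) (u : (Fin d → ℕ) × Fin c →₀ ℤ)
    (y : (Fin d → ℕ) × Fin c) :
    permActd d c σ u (fun k => σ (y.1 k), y.2) = u y := by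
  rw [permActd_apply]
  simp

lemma permActd_comp (σ τ : Equiv.Perm ℕ) (u : (Fin d → ℕ) × Fin c →₀ ℤ) :
    permActd d c σ (permActd d c τ u) = permActd d c (τ.trans σ) u := by
  ext x
  rw [permActd_apply, permActd_apply, permActd_apply]
  rfl

lemma permActd_refl (u : (Fin d → ℕ) × Fin c →₀ ℤ) :
    permActd d c (Equiv.refl ℕ) u = u := by
  ext x
  rw [permActd_apply]
  rfl

lemma permActd_symm_cancel (σ : Equiv.Perm ℕ) (u : (Fin d → ℕ) × Fin c →₀ ℤ) :
    permActd d c σ.symm (permActd d c σ u) = u := by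
  rw [permActd_comp, Equiv.self_trans_symm, permActd_refl]

lemma permActd_cancel_symm (σ : Equiv.Perm ℕ) (u : (Fin d → ℕ) × Fin c →₀ ℤ) :
    permActd d c σ (permActd d c σ.symm u) = u := by
  rw [permActd_comp, Equiv.symm_trans_self, permActd_refl]

lemma permActd_sub (σ : Equiv.Perm ℕ) (u v : (Fin d → ℕ) × Fin c →₀ ℤ) :
    permActd d c σ (u - v) = permActd d c σ u - permActd d c σ v := by
  ext x
  rw [Finsupp.sub_apply, permActd_apply, permActd_apply, permActd_apply, Finsupp.sub_apply]

lemma permActd_zero (σ : Equiv.Perm ℕ) : permActd d c σ (0 : (Fin d → ℕ) × Fin c →₀ ℤ) = 0 := by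
  ext x
  rw [permActd_apply]
  rfl

lemma permActd_ne_zero (σ : Equiv.Perm ℕ) {u : (Fin d → ℕ) × Fin c →₀ ℤ} (h : u ≠ 0) :
    permActd d c σ u ≠ 0 := by
  intro he
  apply h
  have := congrArg (permActd d c σ.symm) he
  rwa [permActd_symm_cancel, permActd_zero] at this

lemma permActd_sqle (σ : Equiv.Perm ℕ) {u v : (Fin d → ℕ) × Fin c →₀ ℤ} (h : Sqle u v) :
    Sqle (permActd d c σ u) (permActd d c σ v) := by
  intro x
  rw [permActd_apply, permActd_apply]
  exact h _

lemma permActd_support (σ : Equiv.Perm ℕ) (u : (Fin d → ℕ) × Fin c →₀ ℤ) :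
    (permActd d c σ u).support = u.support.map (peD d c σ).toEmbedding := by
  ext x
  simp only [Finsupp.mem_support_iff, Finset.mem_map, Equiv.coe_toEmbedding]
  constructor
  · intro hx
    refine ⟨(peD d c σ).symm x, ?_, Equiv.apply_symm_apply _ _⟩
    rwa [permActd_apply, ← peD_symm_apply] at hx
  · rintro ⟨y, hy, rfl⟩
    rw [peD_apply]
    rwa [permActd_apply']

lemma permActd_support_card (σ : Equiv.Perm ℕ) (u : (Fin d → ℕ) × Fin c →₀ ℤ) :
    (permActd d c σ u).support.card = u.support.card := by
  rw [permActd_support, Finset.card_map]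

lemma inSymN_mono {m n : ℕ} {σ : Equiv.Perm ℕ} (h : m ≤ n) (hσ : InSymN m σ) : InSymN n σ :=
  fun i hi => hσ i (le_trans h hi)

lemma inSymN_refl (n : ℕ) : InSymN n (Equiv.refl ℕ) := fun _ _ => rfl

lemma inSymN_symm {n : ℕ} {σ : Equiv.Perm ℕ} (h : InSymN n σ) : InSymN n σ.symm :=
  fun i hi => (Equiv.symm_apply_eq σ).mpr (h i hi).symm

lemma inSymN_lt {n : ℕ} {σ : Equiv.Perm ℕ} (h : InSymN n σ) {i : ℕ} (hi : i < n) : σ i < n := by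
  by_contra hge
  push_neg at hge
  have h1 : σ (σ i) = σ i := h _ hge
  have := σ.injective h1
  omega

lemma isFinPerm_of_inSymN {n : ℕ} {σ : Equiv.Perm ℕ} (h : InSymN n σ) : IsFinPerm σ := by
  apply Set.Finite.subset (Set.finite_Iio n)
  intro i hi
  by_contra hge
  simp only [Set.mem_Iio, not_lt] at hge
  exact hi (h i hge)

lemma exists_inSymN {σ : Equiv.Perm ℕ} (h : IsFinPerm σ) : ∃ n, InSymN n σ := by
  classical
  refine ⟨h.toFinset.sup id + 1, fun i hi => ?_⟩
  by_contra hne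
  have : i ∈ h.toFinset := (Set.Finite.mem_toFinset h).mpr hne
  have := Finset.le_sup (f := id) this
  simp at this
  omega

lemma isFinPerm_symm {σ : Equiv.Perm ℕ} (h : IsFinPerm σ) : IsFinPerm σ.symm := by
  obtain ⟨n, hn⟩ := exists_inSymN h
  exact isFinPerm_of_inSymN (inSymN_symm hn)

lemma suppIn_mono {n n' : ℕ} (h : n ≤ n') {u : (Fin d → ℕ) × Fin c →₀ ℤ}
    (hu : SuppIn d c n u) : SuppIn d c n' u :=
  fun x hx k => lt_of_lt_of_le (hu x hx k) h

lemma suppIn_of_subset {n : ℕ} {u v : (Fin d → ℕ) × Fin c →₀ ℤ}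
    (hsub : u.support ⊆ v.support) (h : SuppIn d c n v) : SuppIn d c n u :=
  fun x hx k =>
    h x (Finsupp.mem_support_iff.mp (hsub (Finsupp.mem_support_iff.mpr hx))) k

lemma suppIn_sub {n : ℕ} {u v : (Fin d → ℕ) × Fin c →₀ ℤ}
    (hu : SuppIn d c n u) (hv : SuppIn d c n v) : SuppIn d c n (u - v) := by
  intro x hx k
  rw [Finsupp.sub_apply] at hx
  by_cases h : u x = 0
  · exact hv x (fun hvx => hx (by rw [h, hvx, sub_zero])) k
  · exact hu x h k

lemma suppIn_permActd {n : ℕ} {σ : Equiv.Perm ℕ} {u : (Fin d → ℕ) × Fin c →₀ ℤ}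
    (hσ : InSymN n σ) (h : SuppIn d c n u) : SuppIn d c n (permActd d c σ u) := by
  intro x hx k
  rw [permActd_apply] at hx
  have := h _ hx k
  have h2 : σ (σ.symm (x.1 k)) < n := inSymN_lt hσ this
  rwa [Equiv.apply_symm_apply] at h2

/-- The set of natural numbers appearing in tuples of the support. -/
def usedNats (u : (Fin d → ℕ) × Fin c →₀ ℤ) : Finset ℕ :=
  u.support.biUnion fun x => Finset.image x.1 Finset.univ

lemma mem_usedNats {u : (Fin d → ℕ) × Fin c →₀ ℤ} {i : ℕ} :
    i ∈ usedNats u ↔ ∃ x, u x ≠ 0 ∧ ∃ k, x.1 k = i := by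
  simp [usedNats, Finsupp.mem_support_iff, eq_comm]

lemma suppIn_iff_usedNats {n : ℕ} {u : (Fin d → ℕ) × Fin c →₀ ℤ} :
    SuppIn d c n u ↔ ∀ i ∈ usedNats u, i < n := by
  constructor
  · intro h i hi
    obtain ⟨x, hx, k, hk⟩ := mem_usedNats.mp hi
    rw [← hk]
    exact h x hx k
  · intro h x hx k
    exact h _ (mem_usedNats.mpr ⟨x, hx, k, rfl⟩)

lemma usedNats_permActd {σ : Equiv.Perm ℕ} {u : (Fin d → ℕ) × Fin c →₀ ℤ} {i : ℕ}
    (h : i ∈ usedNats u) : σ i ∈ usedNats (permActd d c σ u) := by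
  obtain ⟨x, hx, k, hk⟩ := mem_usedNats.mp h
  refine mem_usedNats.mpr ⟨(fun k => σ (x.1 k), x.2), ?_, k, show σ (x.1 k) = σ i from by rw [hk]⟩
  rwa [permActd_apply']

lemma card_usedNats (u : (Fin d → ℕ) × Fin c →₀ ℤ) :
    (usedNats u).card ≤ u.support.card * d := by
  refine le_trans (Finset.card_biUnion_le) ?_
  calc ∑ x ∈ u.support, (Finset.image x.1 Finset.univ).card
      ≤ ∑ _x ∈ u.support, d := by
        refine Finset.sum_le_sum fun x _ => ?_
        refine le_trans Finset.card_image_le ?_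
        simp
    _ = u.support.card * d := by rw [Finset.sum_const, smul_eq_mul]

lemma permActd_fix {π : Equiv.Perm ℕ} {u : (Fin d → ℕ) × Fin c →₀ ℤ}
    (h : ∀ i ∈ usedNats u, π i = i) : permActd d c π u = u := by
  have hsymm : ∀ i ∈ usedNats u, π.symm i = i := by
    intro i hi
    exact (Equiv.symm_apply_eq π).mpr (h i hi).symm
  ext x
  rw [permActd_apply]
  by_cases hy : u (fun k => π.symm (x.1 k), x.2) = 0
  · rw [hy]
    by_contra hx
    have hx' : u x ≠ 0 := fun h0 => hx (by rw [h0])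
    have : (fun k => π.symm (x.1 k), x.2) = x := by
      refine Prod.ext (funext fun k => ?_) rfl
      exact hsymm _ (mem_usedNats.mpr ⟨x, hx', k, rfl⟩)
    rw [this] at hy
    exact hx' hy
  · have : (fun k => π.symm (x.1 k), x.2) = x := by
      refine Prod.ext (funext fun k => ?_) rfl
      have hk : π.symm (x.1 k) ∈ usedNats u :=
        mem_usedNats.mpr ⟨(fun k => π.symm (x.1 k), x.2), hy, k, rfl⟩
      have := h _ hk
      calc π.symm (x.1 k) = π (π.symm (x.1 k)) := (h _ hk).symm ▸ rfl
        _ = x.1 k := Equiv.apply_symm_apply _ _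
    rw [this]

lemma permActd_congr {σ τ : Equiv.Perm ℕ} {u : (Fin d → ℕ) × Fin c →₀ ℤ}
    (h : ∀ i ∈ usedNats u, σ i = τ i) : permActd d c σ u = permActd d c τ u := by
  have hfix : permActd d c (σ.trans τ.symm) u = u :=
    permActd_fix fun i hi => by rw [Equiv.trans_apply, h i hi, Equiv.symm_apply_apply]
  have := congrArg (permActd d c τ) hfix
  rw [permActd_comp] at this
  have he : (σ.trans τ.symm).trans τ = σ := by
    ext i
    simp
  rwa [he] at this

end Perm

section Extend

variable {d c : ℕ}

lemma perm_extend (n : ℕ) (f : ℕ → ℕ) (A : Finset ℕ) (hA : ∀ a ∈ A, a < n)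
    (hf : ∀ a ∈ A, f a < n) (hinj : Set.InjOn f A) :
    ∃ τ : Equiv.Perm ℕ, InSymN n τ ∧ ∀ a ∈ A, τ a = f a := by
  classical
  set p : Fin n → Prop := fun x => (x : ℕ) ∈ A with hp
  set q : Fin n → Prop := fun x => (x : ℕ) ∈ A.image f with hq
  have hbij : Function.Bijective
      (fun x : {x : Fin n // p x} =>
        (⟨⟨f x.1, hf _ x.2⟩, Finset.mem_image_of_mem f x.2⟩ : {x : Fin n // q x})) := by
    constructor
    · rintro ⟨x, hx⟩ ⟨y, hy⟩ hxy
      simp only [Subtype.mk.injEq, Fin.mk.injEq] at hxy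
      have := hinj hx hy hxy
      exact Subtype.ext (Fin.ext this)
    · rintro ⟨y, hy⟩
      obtain ⟨a, ha, hay⟩ := Finset.mem_image.mp hy
      refine ⟨⟨⟨a, hA a ha⟩, ha⟩, ?_⟩
      exact Subtype.ext (Fin.ext hay)
  set e : {x : Fin n // p x} ≃ {x : Fin n // q x} := Equiv.ofBijective _ hbij with he
  set τ0 : Equiv.Perm (Fin n) := e.extendSubtype with hτ0
  set τ : Equiv.Perm ℕ := τ0.extendDomain (Fin.equivSubtype) with hτ
  refine ⟨τ, ?_, ?_⟩
  · intro i hi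
    apply Equiv.Perm.extendDomain_apply_not_subtype
    omega
  · intro a ha
    have haan : a < n := hA a ha
    rw [hτ, Equiv.Perm.extendDomain_apply_subtype τ0 Fin.equivSubtype haan]
    have h2 : Fin.equivSubtype.symm ⟨a, haan⟩ = (⟨a, haan⟩ : Fin n) := rfl
    rw [h2, hτ0, e.extendSubtype_apply_of_mem _ ha]
    rfl

lemma shift_into_window (u : (Fin d → ℕ) × Fin c →₀ ℤ) (n k : ℕ) (hk : k ≤ n)
    (hcard : (usedNats u).card ≤ k) (hsupp : SuppIn d c n u) :
    ∃ σ : Equiv.Perm ℕ, InSymN n σ ∧ SuppIn d c k (permActd d c σ u) := by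
  classical
  set A := usedNats u with hA
  set g : {x // x ∈ A} → Fin A.card := fun x => (A.orderIsoOfFin rfl).symm x with hg
  set f : ℕ → ℕ := fun a => if h : a ∈ A then (g ⟨a, h⟩ : ℕ) else a with hf
  have hfA : ∀ a ∈ A, f a < k := by
    intro a ha
    have : (g ⟨a, ha⟩ : ℕ) < A.card := (g ⟨a, ha⟩).2
    simp only [hf, dif_pos ha]
    omega
  have hinj : Set.InjOn f A := by
    intro a ha b hb hab
    rw [Finset.mem_coe] at ha hb
    simp only [hf, dif_pos ha, dif_pos hb] at hab
    have : g ⟨a, ha⟩ = g ⟨b, hb⟩ := Fin.ext hab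
    have := (A.orderIsoOfFin rfl).symm.injective this
    exact Subtype.ext_iff.mp this
  obtain ⟨σ, hσ, hσf⟩ := perm_extend n f A
    (fun a ha => suppIn_iff_usedNats.mp hsupp a ha) (fun a ha => lt_of_lt_of_le (hfA a ha) hk)
    hinj
  refine ⟨σ, hσ, ?_⟩
  rw [suppIn_iff_usedNats]
  intro i hi
  obtain ⟨x, hx, km, hkm⟩ := mem_usedNats.mp hi
  rw [permActd_apply] at hx
  set y : (Fin d → ℕ) × Fin c := (fun k' => σ.symm (x.1 k'), x.2) with hy
  have hyA : y.1 km ∈ A := mem_usedNats.mpr ⟨y, hx, km, rfl⟩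
  have : x.1 km = σ (y.1 km) := by
    simp [hy, Equiv.apply_symm_apply]
  rw [← hkm, this, hσf _ hyA]
  exact hfA _ hyA

lemma transfer_perm {n r : ℕ} (hrn : r ≤ n) {σ : Equiv.Perm ℕ}
    {b u : (Fin d → ℕ) × Fin c →₀ ℤ} (hu : u = permActd d c σ b) (hb : SuppIn d c r b)
    (hu' : SuppIn d c n u) :
    ∃ τ : Equiv.Perm ℕ, InSymN n τ ∧ u = permActd d c τ b := by
  obtain ⟨τ, hτ, hτσ⟩ := perm_extend n σ (usedNats b)
    (fun a ha => lt_of_lt_of_le (suppIn_iff_usedNats.mp hb a ha) hrn)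
    (fun a ha => by
      have : σ a ∈ usedNats u := hu ▸ usedNats_permActd ha
      exact suppIn_iff_usedNats.mp hu' _ this)
    (Set.injOn_of_injective σ.injective)
  exact ⟨τ, hτ, by rw [hu, permActd_congr fun i hi => (hτσ i hi).symm]⟩

end Extend

section Dickson

variable {d c : ℕ}

lemma antichain_finite (n : ℕ) (S : Set ((Fin d → ℕ) × Fin c →₀ ℤ))
    (hS : ∀ u ∈ S, SuppIn d c n u)
    (hanti : ∀ u ∈ S, ∀ v ∈ S, Sqle v u → v = u) : S.Finite := by
  classical
  by_contra hinf
  rw [← Set.not_infinite, not_not] at hinf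
  set φ := hinf.natEmbedding with hφ
  set g : ℕ → (((Fin d → Fin n) × Fin c) × Bool → ℕ) := fun m x =>
    if x.2 then (((φ m : (Fin d → ℕ) × Fin c →₀ ℤ)) ((fun k => (x.1.1 k : ℕ)), x.1.2)).toNat
    else (-(((φ m : (Fin d → ℕ) × Fin c →₀ ℤ)) ((fun k => (x.1.1 k : ℕ)), x.1.2))).toNat
    with hgdef
  have hpwo : WellQuasiOrdered (fun x y : (((Fin d → Fin n) × Fin c) × Bool) → ℕ => x ≤ y) :=
    wellQuasiOrdered_le
  obtain ⟨a, b, hab, hle⟩ := hpwo g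
  have hsq : Sqle ((φ a : (Fin d → ℕ) × Fin c →₀ ℤ)) ((φ b : (Fin d → ℕ) × Fin c →₀ ℤ)) := by
    intro y
    by_cases hy : ∀ k, y.1 k < n
    · set x₁ : ((Fin d → Fin n) × Fin c) := ((fun k => (⟨y.1 k, hy k⟩ : Fin n)), y.2) with hx₁
      have hyx : ((fun k => ((x₁.1 k : ℕ))), x₁.2) = y := by
        refine Prod.ext (funext fun k => rfl) rfl
      have h1 : g a (x₁, true) ≤ g b (x₁, true) := hle (x₁, true)
      have h2 : g a (x₁, false) ≤ g b (x₁, false) := hle (x₁, false)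
      simp only [hgdef, if_pos, if_neg, Bool.false_eq_true, not_false_iff, ite_true, ite_false,
        hyx] at h1 h2
      set A := (φ a : (Fin d → ℕ) × Fin c →₀ ℤ) y
      set B := (φ b : (Fin d → ℕ) × Fin c →₀ ℤ) y
      constructor
      · rcases lt_trichotomy A 0 with h | h | h
        · have hBneg : B ≤ 0 := by omega
          exact mul_nonneg_iff.mpr (Or.inr ⟨le_of_lt h, hBneg⟩)
        · simp [h]
        · have hBpos : 0 ≤ B := by omega
          exact mul_nonneg (le_of_lt h) hBpos
      · rw [Int.abs_eq_natAbs, Int.abs_eq_natAbs]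
        omega
    · push_neg at hy
      obtain ⟨k, hk⟩ := hy
      have hA : (φ a : (Fin d → ℕ) × Fin c →₀ ℤ) y = 0 := by
        by_contra h
        exact absurd (hS _ (φ a).2 y h k) (by omega)
      have hB : (φ b : (Fin d → ℕ) × Fin c →₀ ℤ) y = 0 := by
        by_contra h
        exact absurd (hS _ (φ b).2 y h k) (by omega)
      rw [hA, hB]
      simp
  have heq := hanti _ (φ b).2 _ (φ a).2 hsq
  have : φ a = φ b := Subtype.ext heq
  have := φ.injective this
  omega

end Dickson

/-- For a `Sym`-invariant chain of lattices `(L n)_{n ≥ 1}` with limit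
`L = ⋃_{n ≥ 1} L n`, the following are equivalent: (i) the chain Graver-stabilizes;
(ii) eventually `L_n = L ∩ ℤ^{(I_n)}` and the Graver basis of `L_n` has bounded support
size; (iii) `L` has a finite equivariant Graver basis. -/
theorem chain_graver_stabilization_tfae (d c : ℕ) (hd : 0 < d) (hc : 0 < c)
    (L : ℕ → AddSubgroup ((Fin d → ℕ) × Fin c →₀ ℤ))
    (hsupp : ∀ n, ∀ u ∈ L n, SuppIn d c n u)
    (hmono : ∀ m n, m ≤ n → L m ≤ L n)
    (hinv : ∀ n σ, InSymN n σ → ∀ u ∈ L n, permActd d c σ u ∈ L n) :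
    List.TFAE
      [ ∃ p, 1 ≤ p ∧ ∃ Bp : Set ((Fin d → ℕ) × Fin c →₀ ℤ),
          Bp ⊆ (↑(L p) : Set ((Fin d → ℕ) × Fin c →₀ ℤ)) ∧
          ∀ n, p ≤ n →
            symOrbitNd d c n Bp = GraverBasis (↑(L n) : Set ((Fin d → ℕ) × Fin c →₀ ℤ)),
        ∃ q q', 1 ≤ q ∧ 1 ≤ q' ∧ ∀ n, q ≤ n →
          ((↑(L n) : Set ((Fin d → ℕ) × Fin c →₀ ℤ))
              = {u | (∃ m, 1 ≤ m ∧ u ∈ L m) ∧ SuppIn d c n u} ∧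
            ∀ u ∈ GraverBasis (↑(L n) : Set ((Fin d → ℕ) × Fin c →₀ ℤ)),
              u.support.card ≤ q'),
        ∃ B : Finset ((Fin d → ℕ) × Fin c →₀ ℤ),
          (↑B : Set ((Fin d → ℕ) × Fin c →₀ ℤ)) ⊆ {u | ∃ m, 1 ≤ m ∧ u ∈ L m} ∧
          symOrbitd d c ↑B = GraverBasis {u | ∃ m, 1 ≤ m ∧ u ∈ L m} ] := by
    classical
  have hLn_sub_LU : ∀ n, 1 ≤ n → ∀ u, u ∈ L n → u ∈ {u | ∃ m, 1 ≤ m ∧ u ∈ L m} :=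
    fun n hn u hu => ⟨n, hn, hu⟩
  have hLUsub : ∀ u v : (Fin d → ℕ) × Fin c →₀ ℤ,
      u ∈ {u | ∃ m, 1 ≤ m ∧ u ∈ L m} → v ∈ {u | ∃ m, 1 ≤ m ∧ u ∈ L m} →
      u - v ∈ {u | ∃ m, 1 ≤ m ∧ u ∈ L m} := by
    rintro u v ⟨m1, hm1, hu⟩ ⟨m2, hm2, hv⟩
    refine ⟨max m1 m2, le_trans hm1 (le_max_left _ _), ?_⟩
    exact sub_mem (hmono m1 _ (le_max_left _ _) hu) (hmono m2 _ (le_max_right _ _) hv)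
  have hLUinv : ∀ (σ : Equiv.Perm ℕ) u, IsFinPerm σ → u ∈ {u | ∃ m, 1 ≤ m ∧ u ∈ L m} →
      permActd d c σ u ∈ {u | ∃ m, 1 ≤ m ∧ u ∈ L m} := by
    rintro σ u hσ ⟨m, hm, hu⟩
    obtain ⟨n0, hn0⟩ := exists_inSymN hσ
    refine ⟨max m n0, le_trans hm (le_max_left _ _), ?_⟩
    exact hinv _ σ (inSymN_mono (le_max_right _ _) hn0) u (hmono m _ (le_max_left _ _) hu)
  have hGLUinv : ∀ (σ : Equiv.Perm ℕ) u, IsFinPerm σ →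
      u ∈ GraverBasis {u | ∃ m, 1 ≤ m ∧ u ∈ L m} →
      permActd d c σ u ∈ GraverBasis {u | ∃ m, 1 ≤ m ∧ u ∈ L m} := by
    rintro σ u hσ ⟨huL, hu0, humin⟩
    refine ⟨hLUinv σ u hσ huL, permActd_ne_zero σ hu0, ?_⟩
    intro v hvL hv0 hsq
    have hw : Sqle (permActd d c σ.symm v) u := by
      have := permActd_sqle σ.symm hsq
      rwa [permActd_symm_cancel] at this
    have hwL := hLUinv σ.symm v (isFinPerm_symm hσ) hvL
    have hw0 : permActd d c σ.symm v ≠ 0 := permActd_ne_zero _ hv0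
    have := humin _ hwL hw0 hw
    have := congrArg (permActd d c σ) this
    rwa [permActd_cancel_symm] at this
  have hGr_sub : ∀ n, 1 ≤ n →
      ((↑(L n) : Set ((Fin d → ℕ) × Fin c →₀ ℤ))
        = {u | (∃ m, 1 ≤ m ∧ u ∈ L m) ∧ SuppIn d c n u}) →
      ∀ u, u ∈ GraverBasis (↑(L n) : Set ((Fin d → ℕ) × Fin c →₀ ℤ)) →
        u ∈ GraverBasis {u | ∃ m, 1 ≤ m ∧ u ∈ L m} := by
    rintro n hn hsat u ⟨huL, hu0, humin⟩
    refine ⟨hLn_sub_LU n hn u huL, hu0, ?_⟩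
    intro v hvLU hv0 hvu
    have husupp : SuppIn d c n u := hsupp n u huL
    have hvsupp : SuppIn d c n v := suppIn_of_subset (sqle_supp_subset hvu) husupp
    have hvn : v ∈ (↑(L n) : Set ((Fin d → ℕ) × Fin c →₀ ℤ)) := by
      rw [hsat]; exact ⟨hvLU, hvsupp⟩
    exact humin v hvn hv0 hvu
  have hGr_sup : ∀ n, 1 ≤ n → ∀ u, u ∈ GraverBasis {u | ∃ m, 1 ≤ m ∧ u ∈ L m} →
      u ∈ L n → u ∈ GraverBasis (↑(L n) : Set ((Fin d → ℕ) × Fin c →₀ ℤ)) := by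
    rintro n hn u ⟨huLU, hu0, humin⟩ hun
    exact ⟨hun, hu0, fun v hv hv0 hvu => humin v (hLn_sub_LU n hn v hv) hv0 hvu⟩
  have satlemma : ∀ (r : ℕ) (B : Set ((Fin d → ℕ) × Fin c →₀ ℤ)), 1 ≤ r →
      (∀ b ∈ B, b ∈ L r) →
      (GraverBasis {u | ∃ m, 1 ≤ m ∧ u ∈ L m} ⊆ symOrbitd d c B) →
      ∀ n, r ≤ n → ∀ u ∈ {u | ∃ m, 1 ≤ m ∧ u ∈ L m}, SuppIn d c n u → u ∈ L n := by
    intro r B hr hBr hGB n hn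
    suffices h : ∀ N u, u ∈ {u | ∃ m, 1 ≤ m ∧ u ∈ L m} → SuppIn d c n u →
        normOne u ≤ N → u ∈ L n by
      intro u hu hsu; exact h (normOne u) u hu hsu le_rfl
    intro N
    induction N with
    | zero =>
      intro u _ _ hN
      have : u = 0 := normOne_eq_zero.mp (Nat.le_zero.mp hN)
      rw [this]; exact zero_mem _
    | succ N ih =>
      intro u hu hsu hN
      by_cases h0 : u = 0
      · rw [h0]; exact zero_mem _
      obtain ⟨v, hvG, hvu⟩ := graver_exists {u | ∃ m, 1 ≤ m ∧ u ∈ L m} hu h0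
      obtain ⟨σ, hσ, b, hbB, hvb⟩ := hGB hvG
      have hvsupp : SuppIn d c n v := suppIn_of_subset (sqle_supp_subset hvu) hsu
      have hbsupp : SuppIn d c r b := hsupp r b (hBr b hbB)
      obtain ⟨τ, hτ, hvτ⟩ := transfer_perm hn hvb hbsupp hvsupp
      have hvLn : v ∈ L n := by
        rw [hvτ]
        exact hinv n τ hτ b (hmono r n hn (hBr b hbB))
      have huvLU := hLUsub u v hu hvG.1
      have huvsupp : SuppIn d c n (u - v) := suppIn_sub hsu hvsupp
      have hnv : normOne v ≠ 0 := fun h => hvG.2.1 (normOne_eq_zero.mp h)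
      have hsum := sqle_normOne_add hvu
      have huvN : normOne (u - v) ≤ N := by omega
      have huvLn := ih (u - v) huvLU huvsupp huvN
      have : u - v + v = u := by abel
      rw [← this]
      exact add_mem huvLn hvLn
  tfae_have 3 → 2
  · rintro ⟨B, hBL, hB⟩
    have hchoice : ∀ b : {x // x ∈ B}, ∃ m, 1 ≤ m ∧ (b : (Fin d → ℕ) × Fin c →₀ ℤ) ∈ L m :=
      fun b => hBL (Finset.mem_coe.mpr b.2)
    choose f hf1 hf2 using hchoice
    set r := max 1 (B.attach.sup f) with hrdef
    have hr1 : 1 ≤ r := le_max_left _ _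
    have hBr : ∀ b ∈ B, b ∈ L r := by
      intro b hb
      have hle : f ⟨b, hb⟩ ≤ r :=
        le_trans (Finset.le_sup (Finset.mem_attach _ _)) (le_max_right _ _)
      exact hmono _ r hle (hf2 ⟨b, hb⟩)
    refine ⟨r, max 1 (B.sup fun b => b.support.card), hr1, le_max_left _ _, ?_⟩
    intro n hn
    have hn1 : 1 ≤ n := le_trans hr1 hn
    have hsat : (↑(L n) : Set ((Fin d → ℕ) × Fin c →₀ ℤ))
        = {u | (∃ m, 1 ≤ m ∧ u ∈ L m) ∧ SuppIn d c n u} := by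
      ext u
      simp only [SetLike.mem_coe, Set.mem_setOf_eq]
      constructor
      · intro hu
        exact ⟨⟨n, hn1, hu⟩, hsupp n u hu⟩
      · rintro ⟨huLU, husup⟩
        exact satlemma r ↑B hr1 (fun b hb => hBr b (Finset.mem_coe.mp hb))
          (le_of_eq hB.symm) n hn u huLU husup
    refine ⟨hsat, ?_⟩
    intro u huG
    have huGLU := hGr_sub n hn1 hsat u huG
    have : u ∈ symOrbitd d c ↑B := by rw [hB]; exact huGLU
    obtain ⟨σ, hσ, b, hbB, hueq⟩ := this
    rw [hueq, permActd_support_card]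
    exact le_trans (Finset.le_sup (f := fun b => b.support.card) (Finset.mem_coe.mp hbB))
      (le_max_right _ _)
  tfae_have 2 → 1
  · rintro ⟨q, q', hq, hq', h⟩
    set p := max q (q' * d) with hpdef
    have hp1 : 1 ≤ p := le_trans hq (le_max_left _ _)
    refine ⟨p, hp1,
      GraverBasis {u | ∃ m, 1 ≤ m ∧ u ∈ L m} ∩ {u | SuppIn d c p u}, ?_, ?_⟩
    · rintro u ⟨huG, husup⟩
      have := (h p (le_max_left _ _)).1
      rw [this]
      exact ⟨huG.1, husup⟩
    · intro n hn
      have hqn : q ≤ n := le_trans (le_max_left _ _) hn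
      have hn1 : 1 ≤ n := le_trans hq hqn
      have hsat := (h n hqn).1
      have hbound := (h n hqn).2
      ext w
      constructor
      · rintro ⟨σ, hσn, b, ⟨hbG, hbsup⟩, rfl⟩
        have hwG := hGLUinv σ b (isFinPerm_of_inSymN hσn) hbG
        have hwsup : SuppIn d c n (permActd d c σ b) :=
          suppIn_permActd hσn (suppIn_mono hn hbsup)
        have hwLn : permActd d c σ b ∈ L n := by
          have : permActd d c σ b ∈ (↑(L n) : Set ((Fin d → ℕ) × Fin c →₀ ℤ)) := by
            rw [hsat]; exact ⟨hwG.1, hwsup⟩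
          exact this
        exact hGr_sup n hn1 _ hwG hwLn
      · intro huG
        have huGLU := hGr_sub n hn1 hsat w huG
        have hcard : w.support.card ≤ q' := hbound w huG
        have hucard : (usedNats w).card ≤ q' * d :=
          le_trans (card_usedNats w) (Nat.mul_le_mul_right d hcard)
        have husup : SuppIn d c n w := hsupp n w huG.1
        have hq'dn : q' * d ≤ n := le_trans (le_max_right q (q' * d)) hn
        obtain ⟨σ, hσ, hshift⟩ := shift_into_window w n (q' * d) hq'dn hucard husup
        have hσG := hGLUinv σ w (isFinPerm_of_inSymN hσ) huGLU
        have hsupP : SuppIn d c p (permActd d c σ w) :=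
          suppIn_mono (le_max_right q (q' * d)) hshift
        refine ⟨σ.symm, inSymN_symm hσ, permActd d c σ w, ⟨hσG, hsupP⟩, ?_⟩
        rw [permActd_symm_cancel]
  tfae_have 1 → 3
  · rintro ⟨p, hp, Bp, hBpLp, hstab⟩
    have hBpG : Bp ⊆ GraverBasis (↑(L p) : Set ((Fin d → ℕ) × Fin c →₀ ℤ)) := by
      intro b hb
      rw [← hstab p le_rfl]
      exact ⟨Equiv.refl ℕ, inSymN_refl p, b, hb, (permActd_refl b).symm⟩
    have hfin : Bp.Finite := by
      refine Set.Finite.subset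
        (antichain_finite p (GraverBasis (↑(L p) : Set ((Fin d → ℕ) × Fin c →₀ ℤ)))
          (fun u hu => hsupp p u hu.1)
          (fun u hu v hv hvu => hu.2.2 v hv.1 hv.2.1 hvu)) hBpG
    have hmonoG : ∀ n N, p ≤ n → n ≤ N →
        GraverBasis (↑(L n) : Set ((Fin d → ℕ) × Fin c →₀ ℤ))
          ⊆ GraverBasis (↑(L N) : Set ((Fin d → ℕ) × Fin c →₀ ℤ)) := by
      intro n N hn hN u hu
      rw [← hstab N (le_trans hn hN)]
      rw [← hstab n hn] at hu
      obtain ⟨σ, hσ, b, hb, rfl⟩ := hu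
      exact ⟨σ, inSymN_mono hN hσ, b, hb, rfl⟩
    have hGsub : ∀ n, p ≤ n →
        GraverBasis (↑(L n) : Set ((Fin d → ℕ) × Fin c →₀ ℤ))
          ⊆ GraverBasis {u | ∃ m, 1 ≤ m ∧ u ∈ L m} := by
      intro n hn u hu
      refine ⟨hLn_sub_LU n (le_trans hp hn) u hu.1, hu.2.1, ?_⟩
      intro v hvLU hv0 hvu
      obtain ⟨m, hm1, hvm⟩ := hvLU
      have huN := hmonoG n (max n m) hn (le_max_left _ _) hu
      exact huN.2.2 v (hmono m (max n m) (le_max_right _ _) hvm) hv0 hvu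
    refine ⟨hfin.toFinset, ?_, ?_⟩
    · rw [Set.Finite.coe_toFinset]
      exact fun b hb => hLn_sub_LU p hp b (hBpLp hb)
    · rw [Set.Finite.coe_toFinset]
      ext w
      constructor
      · rintro ⟨σ, hσ, b, hb, rfl⟩
        exact hGLUinv σ b hσ (hGsub p le_rfl (hBpG hb))
      · rintro ⟨huLU, hu0, humin⟩
        obtain ⟨m, hm, hwm⟩ := huLU
        have hwn : w ∈ L (max m p) := hmono m _ (le_max_left _ _) hwm
        have hwG : w ∈ GraverBasis (↑(L (max m p)) : Set ((Fin d → ℕ) × Fin c →₀ ℤ)) :=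
          ⟨hwn, hu0, fun v hv hv0 hvu =>
            humin v (hLn_sub_LU _ (le_trans hp (le_max_right _ _)) v hv) hv0 hvu⟩
        rw [← hstab _ (le_max_right _ _)] at hwG
        obtain ⟨σ, hσ, b, hb, rfl⟩ := hwG
        exact ⟨σ, isFinPerm_of_inSymN hσ, b, hb, rfl⟩
  tfae_finish
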